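/- arXiv:2007.08202 — 2 statements merged into one kernel-verified Lean document; each statement's English description precedes it below -/
import Mathlib

section
/- Performance difference lemma: for any two policies π and π' in an MDP with discount γ ∈ [0,1), v^{π'} − v^{π} = Σ_{h≥0} γ^h E_{s∼η_h^{π}}[ V^{π'}(s) − Σ_a π(a|s) Q^{π'}(s,a) ]. -/
open scoped BigOperators

/-- A finite Markov decision process with transition probabilities `P`,
reward function `r`, discount factor `γ`, and initial distribution `ρ`. -/
structure MDP (S A : Type) [Fintype S] [Fintype A] where
  P : S → A → S → ℝ
  r : S → A → ℝ
  γ : ℝ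
  ρ : S → ℝ

variable {S A : Type} [Fintype S] [Fintype A]

/-- `P` has nonnegative rows summing to one, `ρ` is a distribution, `0 ≤ γ < 1`. -/
def IsValidMDP (M : MDP S A) : Prop :=
  (∀ s a s', 0 ≤ M.P s a s') ∧ (∀ s a, ∑ s' : S, M.P s a s' = 1) ∧
  (∀ s, 0 ≤ M.ρ s) ∧ (∑ s : S, M.ρ s = 1) ∧ 0 ≤ M.γ ∧ M.γ < 1

/-- A (stationary, stochastic) policy. -/
def IsPolicy (π : S → A → ℝ) : Prop :=
  (∀ s a, 0 ≤ π s a) ∧ ∀ s, ∑ a : A, π s a = 1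

/-- Marginal state distribution at step `h` under policy `π`. -/
noncomputable def stateDist (M : MDP S A) (π : S → A → ℝ) : ℕ → S → ℝ
  | 0 => M.ρ
  | h + 1 => fun s' => ∑ s : S, ∑ a : A, stateDist M π h s * π s a * M.P s a s'

/-- Expected discounted return of `π` from the initial distribution. -/
noncomputable def value (M : MDP S A) (π : S → A → ℝ) : ℝ :=
  ∑' h : ℕ, M.γ ^ h * ∑ s : S, ∑ a : A, stateDist M π h s * π s a * M.r s a

/-- State-action distribution at step `h` under `π`, starting from `init`. -/
noncomputable def saDist (M : MDP S A) (π : S → A → ℝ) (init : S × A → ℝ) :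
    ℕ → S × A → ℝ
  | 0 => init
  | h + 1 => fun p => ∑ q : S × A, saDist M π init h q * M.P q.1 q.2 p.1 * π p.1 p.2

open Classical in
/-- Action-value function `Q^π(s,a)`: discounted sum of expected rewards when
starting from the state-action pair `(s, a)` and following `π` afterwards. -/
noncomputable def Qf (M : MDP S A) (π : S → A → ℝ) (s : S) (a : A) : ℝ :=
  ∑' h : ℕ, M.γ ^ h * ∑ p : S × A,
    saDist M π (fun q => if q = (s, a) then 1 else 0) h p * M.r p.1 p.2

/-- State-value function `V^π(s)`. -/
noncomputable def Vf (M : MDP S A) (π : S → A → ℝ) (s : S) : ℝ :=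
  ∑ a : A, π s a * Qf M π s a

/-- The absorbing-augmented MDP `M'`: the extra state `none = s_abs` and extra
action `none = a_abs` give zero reward and lead deterministically to `s_abs`. -/
noncomputable def absorb (M : MDP S A) : MDP (Option S) (Option A) where
  P := fun s a s' =>
    match s, a with
    | some s0, some a0 => (match s' with | some t => M.P s0 a0 t | none => 0)
    | _, _ => (match s' with | none => 1 | some _ => 0)
  r := fun s a =>
    match s, a with
    | some s0, some a0 => M.r s0 a0
    | _, _ => 0
  γ := M.γ
  ρ := fun s => match s with | some s0 => M.ρ s0 | none => 0

/-- The ζ-constrained policy projection `Ξ`: it keeps the probability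
`ζ(s,a)·π(a|s)` on supported actions `a ∈ A` and sends all remaining mass
to the absorbing action `a_abs = none`. -/
noncomputable def proj (ζ : Option S → Option A → ℝ) (π : Option S → Option A → ℝ) :
    Option S → Option A → ℝ :=
  fun s a =>
    match a with
    | some _ => ζ s a * π s a
    | none => ∑ a' : Option A, π s a' * (1 - ζ s a')
section PDL

open Finset

open Classical in
/-- Point mass at a state-action pair. -/
noncomputable def pdlDirac (p0 : S × A) : S × A → ℝ := fun q => if q = p0 then 1 else 0

/-- Expected reward at step `h`. -/
noncomputable def pdlRew (M : MDP S A) (π : S → A → ℝ) (init : S × A → ℝ) (h : ℕ) : ℝ :=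
  ∑ p : S × A, saDist M π init h p * M.r p.1 p.2

lemma Qf_eq_tsum (M : MDP S A) (π : S → A → ℝ) (s : S) (a : A) :
    Qf M π s a = ∑' h : ℕ, M.γ ^ h * pdlRew M π (pdlDirac (s, a)) h := rfl

lemma saDist_nonneg (M : MDP S A) (hM : IsValidMDP M) (π : S → A → ℝ)
    (hπ : IsPolicy π) (init : S × A → ℝ) (h0 : ∀ q, 0 ≤ init q) :
    ∀ h q, 0 ≤ saDist M π init h q := by
  intro h
  induction h with
  | zero => exact h0
  | succ n ih =>
    intro q
    apply Finset.sum_nonneg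
    intro q' _
    exact mul_nonneg (mul_nonneg (ih q') (hM.1 _ _ _)) (hπ.1 _ _)

lemma saDist_sum_eq (M : MDP S A) (hM : IsValidMDP M) (π : S → A → ℝ)
    (hπ : IsPolicy π) (init : S × A → ℝ) :
    ∀ h, ∑ q : S × A, saDist M π init h q = ∑ q : S × A, init q := by
  intro h
  induction h with
  | zero => rfl
  | succ n ih =>
    rw [← ih]
    show ∑ p : S × A, ∑ q : S × A, saDist M π init n q * M.P q.1 q.2 p.1 * π p.1 p.2 = _
    rw [Finset.sum_comm]
    apply Finset.sum_congr rfl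
    intro q _
    have : ∑ p : S × A, saDist M π init n q * M.P q.1 q.2 p.1 * π p.1 p.2
        = saDist M π init n q * ∑ s' : S, M.P q.1 q.2 s' * ∑ a' : A, π s' a' := by
      rw [Fintype.sum_prod_type]
      simp [Finset.mul_sum, mul_assoc]
    rw [this]
    simp only [hπ.2, mul_one, hM.2.1, mul_one]

lemma saDist_linear (M : MDP S A) (π : S → A → ℝ) (init : S × A → ℝ) :
    ∀ h p, saDist M π init h p =
      ∑ q : S × A, init q * saDist M π (pdlDirac q) h p := by
  intro h
  induction h with
  | zero =>
    intro p
    classical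
    simp [saDist, pdlDirac]
  | succ n ih =>
    intro p
    show ∑ q' : S × A, saDist M π init n q' * M.P q'.1 q'.2 p.1 * π p.1 p.2 = _
    have : ∀ q : S × A, init q * saDist M π (pdlDirac q) (n+1) p
        = ∑ q' : S × A, init q * (saDist M π (pdlDirac q) n q' * M.P q'.1 q'.2 p.1 * π p.1 p.2) := by
      intro q
      rw [show saDist M π (pdlDirac q) (n+1) p
          = ∑ q' : S × A, saDist M π (pdlDirac q) n q' * M.P q'.1 q'.2 p.1 * π p.1 p.2 from rfl]
      rw [Finset.mul_sum]
    simp only [this]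
    rw [Finset.sum_comm]
    apply Finset.sum_congr rfl
    intro q' _
    rw [ih q']
    rw [Finset.sum_mul, Finset.sum_mul]
    apply Finset.sum_congr rfl
    intro q _
    ring

lemma pdlRew_linear (M : MDP S A) (π : S → A → ℝ) (init : S × A → ℝ) (h : ℕ) :
    pdlRew M π init h = ∑ q : S × A, init q * pdlRew M π (pdlDirac q) h := by
  unfold pdlRew
  simp only [saDist_linear M π init h, Finset.sum_mul, Finset.mul_sum]
  rw [Finset.sum_comm]
  apply Finset.sum_congr rfl
  intro q _
  apply Finset.sum_congr rfl
  intro p _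
  ring

lemma saDist_succ_eq (M : MDP S A) (π : S → A → ℝ) (init : S × A → ℝ) :
    ∀ h p, saDist M π init (h+1) p =
      saDist M π (fun p' => ∑ q : S × A, init q * M.P q.1 q.2 p'.1 * π p'.1 p'.2) h p := by
  intro h
  induction h with
  | zero => intro p; rfl
  | succ n ih =>
    intro p
    show ∑ q : S × A, saDist M π init (n+1) q * M.P q.1 q.2 p.1 * π p.1 p.2 = _
    rw [show saDist M π (fun p' => ∑ q : S × A, init q * M.P q.1 q.2 p'.1 * π p'.1 p'.2) (n+1) p
        = ∑ q : S × A, saDist M π (fun p' => ∑ q : S × A, init q * M.P q.1 q.2 p'.1 * π p'.1 p'.2) n q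
            * M.P q.1 q.2 p.1 * π p.1 p.2 from rfl]
    apply Finset.sum_congr rfl
    intro q _
    rw [ih q]

lemma pdlRew_abs_le (M : MDP S A) (hM : IsValidMDP M) (π : S → A → ℝ)
    (hπ : IsPolicy π) (B : ℝ) (hr : ∀ s a, |M.r s a| ≤ B)
    (init : S × A → ℝ) (h0 : ∀ q, 0 ≤ init q) (h1 : ∑ q : S × A, init q = 1)
    (h : ℕ) : |pdlRew M π init h| ≤ B := by
  have hnn := saDist_nonneg M hM π hπ init h0 h
  calc |pdlRew M π init h| ≤ ∑ p : S × A, |saDist M π init h p * M.r p.1 p.2| :=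
        Finset.abs_sum_le_sum_abs _ _
    _ ≤ ∑ p : S × A, saDist M π init h p * B := by
        apply Finset.sum_le_sum
        intro p _
        rw [abs_mul, abs_of_nonneg (hnn p)]
        exact mul_le_mul_of_nonneg_left (hr p.1 p.2) (hnn p)
    _ = B := by rw [← Finset.sum_mul, saDist_sum_eq M hM π hπ init h, h1, one_mul]

lemma pdlDirac_nonneg (p0 : S × A) : ∀ q, 0 ≤ pdlDirac p0 q := by
  intro q; unfold pdlDirac; split <;> norm_num

lemma pdlDirac_sum (p0 : S × A) : ∑ q : S × A, pdlDirac p0 q = 1 := by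
  classical
  unfold pdlDirac
  rw [Finset.sum_ite_eq' Finset.univ p0 (fun _ => (1:ℝ))]
  simp

lemma summable_geo (M : MDP S A) (hM : IsValidMDP M) (B : ℝ) (hB : 0 ≤ B)
    (g : ℕ → ℝ) (hg : ∀ h, |g h| ≤ B) :
    Summable (fun h : ℕ => M.γ ^ h * g h) := by
  apply Summable.of_norm_bounded (g := fun h : ℕ => B * M.γ ^ h)
  · exact (summable_geometric_of_lt_one hM.2.2.2.2.1 hM.2.2.2.2.2).mul_left B
  · intro h
    rw [Real.norm_eq_abs, abs_mul, abs_pow, abs_of_nonneg hM.2.2.2.2.1, mul_comm]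
    exact mul_le_mul_of_nonneg_right (hg h) (pow_nonneg hM.2.2.2.2.1 h)

lemma tsum_geo_abs_le (M : MDP S A) (hM : IsValidMDP M) (B : ℝ) (hB : 0 ≤ B)
    (g : ℕ → ℝ) (hg : ∀ h, |g h| ≤ B) :
    |∑' h : ℕ, M.γ ^ h * g h| ≤ B * (1 - M.γ)⁻¹ := by
  have hγ0 := hM.2.2.2.2.1
  have hγ1 := hM.2.2.2.2.2
  have hs : Summable (fun h : ℕ => B * M.γ ^ h) :=
    (summable_geometric_of_lt_one hγ0 hγ1).mul_left B
  calc |∑' h : ℕ, M.γ ^ h * g h| ≤ ∑' h : ℕ, |M.γ ^ h * g h| := by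
        rw [← Real.norm_eq_abs]
        refine (norm_tsum_le_tsum_norm ?_)
        rw [summable_norm_iff]  -- maybe wrong; fix below
        exact summable_geo M hM B hB g hg
    _ ≤ ∑' h : ℕ, B * M.γ ^ h := by
        apply Summable.tsum_le_tsum _ _ hs
        · intro h
          rw [abs_mul, abs_pow, abs_of_nonneg hγ0, mul_comm]
          exact mul_le_mul_of_nonneg_right (hg h) (pow_nonneg hγ0 h)
        · rw [← summable_norm_iff]
          simpa [Real.norm_eq_abs] using (summable_geo M hM B hB g hg).abs
    _ = B * (1 - M.γ)⁻¹ := by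
        rw [tsum_mul_left, tsum_geometric_of_lt_one hγ0 hγ1]

lemma Qf_abs_le (M : MDP S A) (hM : IsValidMDP M) (B : ℝ) (hB : 0 ≤ B)
    (hr : ∀ s a, |M.r s a| ≤ B) (π : S → A → ℝ) (hπ : IsPolicy π) (s : S) (a : A) :
    |Qf M π s a| ≤ B * (1 - M.γ)⁻¹ := by
  rw [Qf_eq_tsum]
  exact tsum_geo_abs_le M hM B hB _
    (fun h => pdlRew_abs_le M hM π hπ B hr _ (pdlDirac_nonneg _) (pdlDirac_sum _) h)

lemma Vf_abs_le (M : MDP S A) (hM : IsValidMDP M) (B : ℝ) (hB : 0 ≤ B)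
    (hr : ∀ s a, |M.r s a| ≤ B) (π : S → A → ℝ) (hπ : IsPolicy π) (s : S) :
    |Vf M π s| ≤ B * (1 - M.γ)⁻¹ := by
  unfold Vf
  calc |∑ a : A, π s a * Qf M π s a| ≤ ∑ a : A, |π s a * Qf M π s a| :=
        Finset.abs_sum_le_sum_abs _ _
    _ ≤ ∑ a : A, π s a * (B * (1 - M.γ)⁻¹) := by
        apply Finset.sum_le_sum
        intro a _
        rw [abs_mul, abs_of_nonneg (hπ.1 s a)]
        exact mul_le_mul_of_nonneg_left (Qf_abs_le M hM B hB hr π hπ s a) (hπ.1 s a)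
    _ = B * (1 - M.γ)⁻¹ := by rw [← Finset.sum_mul, hπ.2, one_mul]

lemma Qf_bellman (M : MDP S A) (hM : IsValidMDP M) (B : ℝ) (hB : 0 ≤ B)
    (hr : ∀ s a, |M.r s a| ≤ B) (π : S → A → ℝ) (hπ : IsPolicy π) (s : S) (a : A) :
    Qf M π s a = M.r s a + M.γ * ∑ s' : S, M.P s a s' * Vf M π s' := by
  have hγ0 := hM.2.2.2.2.1
  have key : ∀ q : S × A, Summable (fun h : ℕ => M.γ ^ h * pdlRew M π (pdlDirac q) h) :=
    fun q => summable_geo M hM B hB _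
      (fun h => pdlRew_abs_le M hM π hπ B hr _ (pdlDirac_nonneg _) (pdlDirac_sum _) h)
  rw [Qf_eq_tsum]
  rw [Summable.tsum_eq_zero_add (key (s, a))]
  have h0 : M.γ ^ 0 * pdlRew M π (pdlDirac (s, a)) 0 = M.r s a := by
    classical
    simp [pdlRew, saDist, pdlDirac]
  rw [h0]
  congr 1
  -- remaining: ∑' h, γ^(h+1) * pdlRew (h+1) = γ * ∑ s' P s a s' * Vf s'
  have hstep : ∀ h : ℕ, pdlRew M π (pdlDirac (s, a)) (h + 1)
      = ∑ q : S × A, (M.P s a q.1 * π q.1 q.2) * pdlRew M π (pdlDirac q) h := by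
    intro h
    have hinit : (fun p' : S × A => ∑ q : S × A, pdlDirac (s, a) q * M.P q.1 q.2 p'.1 * π p'.1 p'.2)
        = fun p' : S × A => M.P s a p'.1 * π p'.1 p'.2 := by
      funext p'
      classical
      simp [pdlDirac]
    have : pdlRew M π (pdlDirac (s, a)) (h + 1)
        = pdlRew M π (fun p' : S × A => M.P s a p'.1 * π p'.1 p'.2) h := by
      unfold pdlRew
      apply Finset.sum_congr rfl
      intro p _
      rw [saDist_succ_eq, hinit]
    rw [this, pdlRew_linear]
  have : (fun h : ℕ => M.γ ^ (h + 1) * pdlRew M π (pdlDirac (s, a)) (h + 1))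
      = fun h : ℕ => ∑ q : S × A, M.γ * ((M.P s a q.1 * π q.1 q.2) * (M.γ ^ h * pdlRew M π (pdlDirac q) h)) := by
    funext h
    rw [hstep h, Finset.mul_sum]
    apply Finset.sum_congr rfl
    intro q _
    ring
  rw [this]
  rw [Summable.tsum_finsetSum (fun q _ => (((key q).mul_left _).mul_left _))]
  have : ∀ q : S × A, ∑' h : ℕ, M.γ * ((M.P s a q.1 * π q.1 q.2) * (M.γ ^ h * pdlRew M π (pdlDirac q) h))
      = M.γ * ((M.P s a q.1 * π q.1 q.2) * Qf M π q.1 q.2) := by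
    intro q
    rw [tsum_mul_left, tsum_mul_left, Qf_eq_tsum]
  simp only [this]
  rw [← Finset.mul_sum]
  congr 1
  rw [Fintype.sum_prod_type]
  unfold Vf
  apply Finset.sum_congr rfl
  intro s' _
  rw [Finset.mul_sum]
  apply Finset.sum_congr rfl
  intro a' _
  ring

lemma stateDist_nonneg (M : MDP S A) (hM : IsValidMDP M) (π : S → A → ℝ)
    (hπ : IsPolicy π) : ∀ h s, 0 ≤ stateDist M π h s := by
  intro h
  induction h with
  | zero => exact hM.2.2.1
  | succ n ih =>
    intro s'
    apply Finset.sum_nonneg; intro s _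
    apply Finset.sum_nonneg; intro a _
    exact mul_nonneg (mul_nonneg (ih s) (hπ.1 s a)) (hM.1 s a s')

lemma stateDist_sum_eq (M : MDP S A) (hM : IsValidMDP M) (π : S → A → ℝ)
    (hπ : IsPolicy π) : ∀ h, ∑ s : S, stateDist M π h s = 1 := by
  intro h
  induction h with
  | zero => exact hM.2.2.2.1
  | succ n ih =>
    show ∑ s' : S, ∑ s : S, ∑ a : A, stateDist M π n s * π s a * M.P s a s' = 1
    rw [Finset.sum_comm]
    have : ∀ s : S, ∑ s' : S, ∑ a : A, stateDist M π n s * π s a * M.P s a s'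
        = stateDist M π n s := by
      intro s
      rw [Finset.sum_comm]
      have : ∀ a : A, ∑ s' : S, stateDist M π n s * π s a * M.P s a s'
          = stateDist M π n s * π s a := by
        intro a
        rw [← Finset.mul_sum, hM.2.1, mul_one]
      simp only [this]
      rw [← Finset.mul_sum, hπ.2, mul_one]
    simp only [this]
    exact ih

/-- saDist from ρ⊗π equals stateDist ⊗ π. -/
lemma saDist_stateDist (M : MDP S A) (π : S → A → ℝ) :
    ∀ h p, saDist M π (fun q : S × A => M.ρ q.1 * π q.1 q.2) h p
      = stateDist M π h p.1 * π p.1 p.2 := by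
  intro h
  induction h with
  | zero => intro p; rfl
  | succ n ih =>
    intro p
    show ∑ q : S × A, saDist M π (fun q : S × A => M.ρ q.1 * π q.1 q.2) n q
        * M.P q.1 q.2 p.1 * π p.1 p.2 = _
    simp only [ih]
    rw [show stateDist M π (n+1) p.1
        = ∑ s : S, ∑ a : A, stateDist M π n s * π s a * M.P s a p.1 from rfl]
    rw [Fintype.sum_prod_type, Finset.sum_mul]
    apply Finset.sum_congr rfl
    intro s _
    rw [Finset.sum_mul]

lemma value_eq_rew (M : MDP S A) (π : S → A → ℝ) :
    value M π = ∑' h : ℕ, M.γ ^ h * pdlRew M π (fun q : S × A => M.ρ q.1 * π q.1 q.2) h := by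
  unfold value pdlRew
  apply tsum_congr
  intro h
  congr 1
  rw [Fintype.sum_prod_type]
  apply Finset.sum_congr rfl
  intro s _
  apply Finset.sum_congr rfl
  intro a _
  rw [saDist_stateDist]

lemma value_eq_V (M : MDP S A) (hM : IsValidMDP M) (B : ℝ) (hB : 0 ≤ B)
    (hr : ∀ s a, |M.r s a| ≤ B) (π : S → A → ℝ) (hπ : IsPolicy π) :
    value M π = ∑ s : S, M.ρ s * Vf M π s := by
  have key : ∀ q : S × A, Summable (fun h : ℕ => M.γ ^ h * pdlRew M π (pdlDirac q) h) :=
    fun q => summable_geo M hM B hB _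
      (fun h => pdlRew_abs_le M hM π hπ B hr _ (pdlDirac_nonneg _) (pdlDirac_sum _) h)
  rw [value_eq_rew]
  have : (fun h : ℕ => M.γ ^ h * pdlRew M π (fun q : S × A => M.ρ q.1 * π q.1 q.2) h)
      = fun h : ℕ => ∑ q : S × A, (M.ρ q.1 * π q.1 q.2) * (M.γ ^ h * pdlRew M π (pdlDirac q) h) := by
    funext h
    rw [pdlRew_linear, Finset.mul_sum]
    apply Finset.sum_congr rfl
    intro q _
    ring
  rw [this, Summable.tsum_finsetSum (fun q _ => ((key q).mul_left _))]
  have : ∀ q : S × A, ∑' h : ℕ, (M.ρ q.1 * π q.1 q.2) * (M.γ ^ h * pdlRew M π (pdlDirac q) h)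
      = (M.ρ q.1 * π q.1 q.2) * Qf M π q.1 q.2 := by
    intro q
    rw [tsum_mul_left, Qf_eq_tsum]
  simp only [this]
  rw [Fintype.sum_prod_type]
  apply Finset.sum_congr rfl
  intro s _
  unfold Vf
  rw [Finset.mul_sum]
  apply Finset.sum_congr rfl
  intro a _
  ring

end PDL

open Filter Topology

/-- **Performance difference lemma.**
`v^{π'} − v^{π} = Σ_{h≥0} γ^h E_{s∼η_h^{π}}[V^{π'}(s) − Σ_a π(a|s) Q^{π'}(s,a)]`. -/
theorem performance_difference (M : MDP S A) (hM : IsValidMDP M)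
    (B : ℝ) (hr : ∀ s a, |M.r s a| ≤ B)
    (π π' : S → A → ℝ) (hπ : IsPolicy π) (hπ' : IsPolicy π') :
    value M π' - value M π =
      ∑' h : ℕ, M.γ ^ h * ∑ s : S, stateDist M π h s *
        (Vf M π' s - ∑ a : A, π s a * Qf M π' s a) := by
  classical
  have hγ0 := hM.2.2.2.2.1
  have hγ1 := hM.2.2.2.2.2
  have hB : 0 ≤ B := by
    have hSne : Nonempty S := by
      by_contra h
      rw [not_nonempty_iff] at h
      have := hM.2.2.2.1
      simp [Finset.univ_eq_empty] at this
    obtain ⟨s⟩ := hSne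
    have hAne : Nonempty A := by
      by_contra h
      rw [not_nonempty_iff] at h
      have := hπ.2 s
      simp [Finset.univ_eq_empty] at this
    obtain ⟨a⟩ := hAne
    exact (abs_nonneg _).trans (hr s a)
  set C := B * (1 - M.γ)⁻¹ with hCdef
  have hC0 : 0 ≤ C := mul_nonneg hB (inv_nonneg.mpr (by linarith))
  set W : ℕ → ℝ := fun h => ∑ s : S, stateDist M π h s * Vf M π' s with hWdef
  set R : ℕ → ℝ := fun h => ∑ s : S, ∑ a : A, stateDist M π h s * π s a * M.r s a with hRdef
  set f : ℕ → ℝ := fun h => M.γ ^ h * W h with hfdef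
  have hWbd : ∀ h, |W h| ≤ C := by
    intro h
    calc |W h| ≤ ∑ s : S, |stateDist M π h s * Vf M π' s| := Finset.abs_sum_le_sum_abs _ _
      _ ≤ ∑ s : S, stateDist M π h s * C := by
          apply Finset.sum_le_sum; intro s _
          rw [abs_mul, abs_of_nonneg (stateDist_nonneg M hM π hπ h s)]
          exact mul_le_mul_of_nonneg_left (Vf_abs_le M hM B hB hr π' hπ' s)
            (stateDist_nonneg M hM π hπ h s)
      _ = C := by rw [← Finset.sum_mul, stateDist_sum_eq M hM π hπ h, one_mul]
  have hReq : ∀ h, R h = pdlRew M π (fun q : S × A => M.ρ q.1 * π q.1 q.2) h := by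
    intro h
    rw [hRdef]
    unfold pdlRew
    rw [Fintype.sum_prod_type]
    apply Finset.sum_congr rfl; intro s _
    apply Finset.sum_congr rfl; intro a _
    rw [saDist_stateDist]
  have hρπ0 : ∀ q : S × A, 0 ≤ M.ρ q.1 * π q.1 q.2 :=
    fun q => mul_nonneg (hM.2.2.1 q.1) (hπ.1 q.1 q.2)
  have hρπ1 : ∑ q : S × A, M.ρ q.1 * π q.1 q.2 = 1 := by
    rw [Fintype.sum_prod_type]
    have : ∀ s : S, ∑ a : A, M.ρ s * π s a = M.ρ s := by
      intro s; rw [← Finset.mul_sum, hπ.2, mul_one]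
    simp only [this]
    exact hM.2.2.2.1
  have hRbd : ∀ h, |R h| ≤ B := by
    intro h
    rw [hReq h]
    exact pdlRew_abs_le M hM π hπ B hr _ hρπ0 hρπ1 h
  have sR : Summable (fun h : ℕ => M.γ ^ h * R h) := summable_geo M hM B hB R hRbd
  have sf : Summable f := summable_geo M hM C hC0 W hWbd
  have sfs : Summable (fun h : ℕ => f (h + 1)) := (summable_nat_add_iff 1).mpr sf
  have hf0 : Tendsto f atTop (𝓝 0) := by
    have hb : ∀ n : ℕ, ‖f n‖ ≤ C * M.γ ^ n := by
      intro n
      show ‖M.γ ^ n * W n‖ ≤ _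
      rw [Real.norm_eq_abs, abs_mul, abs_pow, abs_of_nonneg hγ0, mul_comm]
      exact mul_le_mul_of_nonneg_right (hWbd n) (pow_nonneg hγ0 n)
    exact squeeze_zero_norm hb
      (by simpa using (tendsto_pow_atTop_nhds_zero_of_lt_one hγ0 hγ1).const_mul C)
  have htel : HasSum (fun h : ℕ => f h - f (h + 1)) (f 0) := by
    rw [(sf.sub sfs).hasSum_iff_tendsto_nat]
    have hps : ∀ n : ℕ, ∑ i ∈ Finset.range n, (f i - f (i + 1)) = f 0 - f n :=
      fun n => Finset.sum_range_sub' f n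
    simp only [hps]
    simpa using tendsto_const_nhds.sub hf0
  have hterm : ∀ h : ℕ, M.γ ^ h * ∑ s : S, stateDist M π h s *
        (Vf M π' s - ∑ a : A, π s a * Qf M π' s a)
      = (f h - f (h + 1)) - M.γ ^ h * R h := by
    intro h
    have hWsucc : W (h + 1) = ∑ s : S, stateDist M π h s *
        ∑ a : A, π s a * ∑ s' : S, M.P s a s' * Vf M π' s' := by
      rw [hWdef]
      have hsd : ∀ s' : S, stateDist M π (h + 1) s'
          = ∑ s : S, ∑ a : A, stateDist M π h s * π s a * M.P s a s' := fun _ => rfl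
      simp only [hsd, Finset.sum_mul, Finset.mul_sum]
      rw [Finset.sum_comm]
      apply Finset.sum_congr rfl; intro s _
      rw [Finset.sum_comm]
      apply Finset.sum_congr rfl; intro a _
      apply Finset.sum_congr rfl; intro s' _
      ring
    have hQ : ∀ s : S, ∑ a : A, π s a * Qf M π' s a
        = (∑ a : A, π s a * M.r s a)
          + M.γ * ∑ a : A, π s a * ∑ s' : S, M.P s a s' * Vf M π' s' := by
      intro s
      rw [Finset.mul_sum, ← Finset.sum_add_distrib]
      apply Finset.sum_congr rfl
      intro a _
      rw [Qf_bellman M hM B hB hr π' hπ' s a]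
      ring
    have key : ∑ s : S, stateDist M π h s * (Vf M π' s - ∑ a : A, π s a * Qf M π' s a)
        = W h - R h - M.γ * W (h + 1) := by
      rw [hWsucc, hWdef, hRdef]
      simp only [hQ]
      rw [Finset.mul_sum, ← Finset.sum_sub_distrib, ← Finset.sum_sub_distrib]
      apply Finset.sum_congr rfl
      intro s _
      rw [show ∑ a : A, stateDist M π h s * π s a * M.r s a
          = stateDist M π h s * ∑ a : A, π s a * M.r s a from by
            rw [Finset.mul_sum]; exact Finset.sum_congr rfl fun a _ => mul_assoc _ _ _]
      ring
    rw [key, hfdef]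
    ring
  have hvπ : value M π = ∑' h : ℕ, M.γ ^ h * R h := rfl
  have hf0eq : f 0 = value M π' := by
    rw [value_eq_V M hM B hB hr π' hπ']
    show M.γ ^ 0 * ∑ s : S, stateDist M π 0 s * Vf M π' s = _
    rw [pow_zero, one_mul]
    rfl
  rw [tsum_congr hterm, Summable.tsum_sub (sf.sub sfs) sR, htel.tsum_eq, hf0eq, ← hvπ]
end

section
/- Let π_t be a deterministic policy with π_t(s) ∈ argmax_{a} ζ(s,a)f_t(s,a), and let π̃ be a policy such that π̃(a|s) > 0 implies ζ(s,a) = 1 or a = a_abs (with Q^{π̃}(s,a_abs) = 0). Then v^{π̃} − v^{π_t} ≤ Σ_{h≥0} γ^h ( ‖ζ(Q^{π̃} − f_t)‖_{1, η_h^{π_t}×π̃} + ‖ζ(Q^{π̃} − f_t)‖_{1, η_h^{π_t}×π_t} ). -/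
open scoped BigOperators

variable {S A : Type} [Fintype S] [Fintype A]

/- ================= helpers ================= -/

section Helpers
variable (N : MDP S A) (π : S → A → ℝ)

lemma saDist_shift (init : S × A → ℝ) (h : ℕ) :
    saDist N π init (h + 1) =
      saDist N π (fun p : S × A => ∑ q : S × A, init q * N.P q.1 q.2 p.1 * π p.1 p.2) h := by
  induction h with
  | zero => rfl
  | succ n ih =>
      show (fun p : S × A => ∑ q : S × A, saDist N π init (n+1) q * N.P q.1 q.2 p.1 * π p.1 p.2) = _
      rw [ih]; rfl

lemma saDist_lin {ι : Type} [Fintype ι] (c : ι → ℝ) (e : ι → S × A → ℝ) (h : ℕ) (p : S × A) :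
    saDist N π (fun q => ∑ i : ι, c i * e i q) h p
      = ∑ i : ι, c i * saDist N π (e i) h p := by
  induction h generalizing p with
  | zero => rfl
  | succ n ih =>
      show (∑ q : S × A, saDist N π _ n q * N.P q.1 q.2 p.1 * π p.1 p.2) = _
      simp only [ih, Finset.sum_mul, Finset.mul_sum, mul_assoc]
      rw [Finset.sum_comm]
      simp only [saDist, Finset.mul_sum, mul_assoc]

open Classical in
lemma saDist_delta_decomp (init : S × A → ℝ) (h : ℕ) (p : S × A) :
    saDist N π init h p
      = ∑ x : S × A, init x * saDist N π (fun q => if q = x then 1 else 0) h p := by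
  rw [← saDist_lin]
  congr 1
  funext q
  simp

lemma saDist_nonneg_s16 (hP : ∀ s a s', 0 ≤ N.P s a s') (hπ : ∀ s a, 0 ≤ π s a)
    (init : S × A → ℝ) (h0 : ∀ p, 0 ≤ init p) (h : ℕ) (p : S × A) :
    0 ≤ saDist N π init h p := by
  induction h generalizing p with
  | zero => exact h0 p
  | succ n ih =>
      refine Finset.sum_nonneg fun q _ => ?_
      exact mul_nonneg (mul_nonneg (ih q) (hP _ _ _)) (hπ _ _)

lemma saDist_mass (hP1 : ∀ s a, ∑ s' : S, N.P s a s' = 1) (hπ1 : ∀ s, ∑ a : A, π s a = 1)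
    (init : S × A → ℝ) (h : ℕ) :
    ∑ p : S × A, saDist N π init h p = ∑ p : S × A, init p := by
  induction h with
  | zero => rfl
  | succ n ih =>
      rw [← ih]
      show (∑ p : S × A, ∑ q : S × A, saDist N π init n q * N.P q.1 q.2 p.1 * π p.1 p.2) = _
      rw [Finset.sum_comm]
      simp only [saDist, Finset.mul_sum, mul_assoc]
      refine Finset.sum_congr rfl fun q _ => ?_
      rw [Fintype.sum_prod_type]
      simp only [mul_assoc, ← Finset.mul_sum, hπ1, mul_one, hP1]

open Classical in
noncomputable def dlt (x : S × A) : S × A → ℝ := fun q => if q = x then 1 else 0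

noncomputable def rew (N : MDP S A) (π : S → A → ℝ) (init : S × A → ℝ) (h : ℕ) : ℝ :=
  ∑ p : S × A, saDist N π init h p * N.r p.1 p.2

noncomputable def rBound (N : MDP S A) : ℝ := ∑ p : S × A, N.r p.1 p.2

open Classical in
lemma dlt_nonneg (x : S × A) (p : S × A) : 0 ≤ dlt x p := by
  unfold dlt; split <;> norm_num

open Classical in
lemma dlt_sum (x : S × A) : ∑ p : S × A, dlt x p = 1 := by
  unfold dlt; simp

section Helpers2
variable (N : MDP S A) (π : S → A → ℝ)
variable (hP : ∀ s a s', 0 ≤ N.P s a s') (hP1 : ∀ s a, ∑ s' : S, N.P s a s' = 1)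
variable (hπ0 : ∀ s a, 0 ≤ π s a) (hπ1 : ∀ s, ∑ a : A, π s a = 1)
variable (hr : ∀ s a, 0 ≤ N.r s a) (hγ0 : 0 ≤ N.γ) (hγ1 : N.γ < 1)

set_option linter.unusedSectionVars false

lemma Qf_eq (s : S) (a : A) :
    Qf N π s a = ∑' h : ℕ, N.γ ^ h * rew N π (dlt (s, a)) h := rfl

include hP hP1 hπ0 hπ1 hr hγ0 hγ1

lemma r_le_rBound (p : S × A) : N.r p.1 p.2 ≤ rBound N :=
  Finset.single_le_sum (f := fun p : S × A => N.r p.1 p.2)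
    (fun q _ => hr q.1 q.2) (Finset.mem_univ p)

lemma rBound_nonneg : 0 ≤ rBound N :=
  Finset.sum_nonneg fun q _ => hr q.1 q.2

lemma rew_nonneg (init : S × A → ℝ) (h0 : ∀ p, 0 ≤ init p) (h : ℕ) :
    0 ≤ rew N π init h :=
  Finset.sum_nonneg fun p _ =>
    mul_nonneg (saDist_nonneg_s16 N π hP hπ0 init h0 h p) (hr p.1 p.2)

lemma rew_le (init : S × A → ℝ) (h0 : ∀ p, 0 ≤ init p) (h : ℕ) :
    rew N π init h ≤ (∑ p : S × A, init p) * rBound N := by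
  calc rew N π init h ≤ ∑ p : S × A, saDist N π init h p * rBound N := by
        refine Finset.sum_le_sum fun p _ => ?_
        exact mul_le_mul_of_nonneg_left (r_le_rBound N π hP hP1 hπ0 hπ1 hr hγ0 hγ1 p)
          (saDist_nonneg_s16 N π hP hπ0 init h0 h p)
    _ = (∑ p : S × A, init p) * rBound N := by
        rw [← Finset.sum_mul, saDist_mass N π hP1 hπ1]

lemma summable_rew (init : S × A → ℝ) (h0 : ∀ p, 0 ≤ init p) :
    Summable (fun h : ℕ => N.γ ^ h * rew N π init h) := by
  refine Summable.of_nonneg_of_le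
    (fun h => mul_nonneg (pow_nonneg hγ0 h) (rew_nonneg N π hP hP1 hπ0 hπ1 hr hγ0 hγ1 init h0 h))
    (fun h => ?_)
    ((summable_geometric_of_lt_one hγ0 hγ1).mul_right ((∑ p : S × A, init p) * rBound N))
  exact mul_le_mul_of_nonneg_left (rew_le N π hP hP1 hπ0 hπ1 hr hγ0 hγ1 init h0 h)
    (pow_nonneg hγ0 h)

lemma Qf_nonneg (s : S) (a : A) : 0 ≤ Qf N π s a := by
  rw [Qf_eq]
  exact tsum_nonneg fun h =>
    mul_nonneg (pow_nonneg hγ0 h) (rew_nonneg N π hP hP1 hπ0 hπ1 hr hγ0 hγ1 _ (fun p => dlt_nonneg _ p) h)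

lemma summable_Qf (s : S) (a : A) :
    Summable (fun h : ℕ => N.γ ^ h * rew N π (dlt (s, a)) h) :=
  summable_rew N π hP hP1 hπ0 hπ1 hr hγ0 hγ1 _ (fun p => dlt_nonneg _ p)

lemma Qf_le (s : S) (a : A) : Qf N π s a ≤ (1 - N.γ)⁻¹ * rBound N := by
  rw [Qf_eq]
  have h1 : ∀ h : ℕ, N.γ ^ h * rew N π (dlt (s, a)) h ≤ N.γ ^ h * rBound N := by
    intro h
    have := rew_le N π hP hP1 hπ0 hπ1 hr hγ0 hγ1 (dlt (s, a)) (fun p => dlt_nonneg _ p) h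
    rw [dlt_sum, one_mul] at this
    exact mul_le_mul_of_nonneg_left this (pow_nonneg hγ0 h)
  calc (∑' h : ℕ, N.γ ^ h * rew N π (dlt (s, a)) h)
      ≤ ∑' h : ℕ, N.γ ^ h * rBound N := by
        refine Summable.tsum_le_tsum h1 (summable_Qf N π hP hP1 hπ0 hπ1 hr hγ0 hγ1 s a) ?_
        exact (summable_geometric_of_lt_one hγ0 hγ1).mul_right _
    _ = (1 - N.γ)⁻¹ * rBound N := by
        rw [tsum_mul_right, tsum_geometric_of_lt_one hγ0 hγ1]

lemma Vf_nonneg (s : S) : 0 ≤ Vf N π s :=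
  Finset.sum_nonneg fun a _ => mul_nonneg (hπ0 s a) (Qf_nonneg N π hP hP1 hπ0 hπ1 hr hγ0 hγ1 s a)

lemma Vf_le (s : S) : Vf N π s ≤ (1 - N.γ)⁻¹ * rBound N := by
  calc Vf N π s ≤ ∑ a : A, π s a * ((1 - N.γ)⁻¹ * rBound N) := by
        refine Finset.sum_le_sum fun a _ => ?_
        exact mul_le_mul_of_nonneg_left (Qf_le N π hP hP1 hπ0 hπ1 hr hγ0 hγ1 s a) (hπ0 s a)
    _ = (1 - N.γ)⁻¹ * rBound N := by rw [← Finset.sum_mul, hπ1, one_mul]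

end Helpers2

section Helpers3
variable (N : MDP S A) (π : S → A → ℝ)

lemma rew_lin {ι : Type} [Fintype ι] (c : ι → ℝ) (e : ι → S × A → ℝ) (h : ℕ) :
    rew N π (fun q => ∑ i : ι, c i * e i q) h = ∑ i : ι, c i * rew N π (e i) h := by
  simp only [rew, saDist_lin, Finset.sum_mul, mul_assoc]
  rw [Finset.sum_comm]
  simp only [← Finset.mul_sum]

open Classical in
lemma rew_dlt_zero (s : S) (a : A) : rew N π (dlt (s, a)) 0 = N.r s a := by
  show (∑ p : S × A, (if p = (s,a) then (1:ℝ) else 0) * N.r p.1 p.2) = N.r s a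
  simp [ite_mul]

open Classical in
lemma rew_dlt_succ (s : S) (a : A) (h : ℕ) :
    rew N π (dlt (s, a)) (h + 1)
      = ∑ x : S × A, (N.P s a x.1 * π x.1 x.2) * rew N π (dlt x) h := by
  unfold rew
  rw [saDist_shift]
  have hinit : (fun p : S × A => ∑ q : S × A, dlt (s,a) q * N.P q.1 q.2 p.1 * π p.1 p.2)
      = (fun q : S × A => ∑ x : S × A, (N.P s a x.1 * π x.1 x.2) * dlt x q) := by
    funext q
    simp [dlt, ite_mul, mul_ite]
  rw [hinit]
  simp only [saDist_lin]
  simp only [Finset.sum_mul, mul_assoc]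
  rw [Finset.sum_comm]
  simp only [← Finset.mul_sum]

lemma stateDist_saDist (h : ℕ) (p : S × A) :
    saDist N π (fun p : S × A => N.ρ p.1 * π p.1 p.2) h p
      = stateDist N π h p.1 * π p.1 p.2 := by
  induction h generalizing p with
  | zero => rfl
  | succ n ih =>
      show (∑ q : S × A, saDist N π _ n q * N.P q.1 q.2 p.1 * π p.1 p.2) = _
      simp only [ih]
      show _ = (∑ s : S, ∑ a : A, stateDist N π n s * π s a * N.P s a p.1) * π p.1 p.2
      rw [Fintype.sum_prod_type, Finset.sum_mul]
      refine Finset.sum_congr rfl fun s _ => ?_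
      rw [Finset.sum_mul]

open Classical in
lemma value_integrand_eq (h : ℕ) :
    (∑ s : S, ∑ a : A, stateDist N π h s * π s a * N.r s a)
      = ∑ x : S × A, (N.ρ x.1 * π x.1 x.2) * rew N π (dlt x) h := by
  have h1 : (∑ s : S, ∑ a : A, stateDist N π h s * π s a * N.r s a)
      = rew N π (fun p : S × A => N.ρ p.1 * π p.1 p.2) h := by
    unfold rew
    rw [Fintype.sum_prod_type]
    refine Finset.sum_congr rfl fun s _ => Finset.sum_congr rfl fun a _ => ?_
    rw [stateDist_saDist]
  have h2 : (fun p : S × A => N.ρ p.1 * π p.1 p.2)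
      = fun q : S × A => ∑ x : S × A, (N.ρ x.1 * π x.1 x.2) * dlt x q := by
    funext q
    simp [dlt, mul_ite]
  rw [h1, h2, rew_lin]

variable (hP : ∀ s a s', 0 ≤ N.P s a s') (hP1 : ∀ s a, ∑ s' : S, N.P s a s' = 1)
variable (hπ0 : ∀ s a, 0 ≤ π s a) (hπ1 : ∀ s, ∑ a : A, π s a = 1)
variable (hr : ∀ s a, 0 ≤ N.r s a) (hγ0 : 0 ≤ N.γ) (hγ1 : N.γ < 1)

set_option linter.unusedSectionVars false
include hP hP1 hπ0 hπ1 hr hγ0 hγ1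

lemma bellman (s : S) (a : A) :
    Qf N π s a = N.r s a + N.γ * ∑ s' : S, N.P s a s' * Vf N π s' := by
  rw [Qf_eq, Summable.tsum_eq_zero_add (summable_Qf N π hP hP1 hπ0 hπ1 hr hγ0 hγ1 s a)]
  rw [pow_zero, one_mul, rew_dlt_zero]
  congr 1
  have e1 : ∀ h : ℕ, N.γ ^ (h + 1) * rew N π (dlt (s, a)) (h + 1)
      = ∑ x : S × A, (N.P s a x.1 * π x.1 x.2 * N.γ) * (N.γ ^ h * rew N π (dlt x) h) := by
    intro h
    rw [rew_dlt_succ, Finset.mul_sum]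
    refine Finset.sum_congr rfl fun x _ => ?_
    ring
  calc (∑' h : ℕ, N.γ ^ (h + 1) * rew N π (dlt (s, a)) (h + 1))
      = ∑' h : ℕ, ∑ x : S × A,
          (N.P s a x.1 * π x.1 x.2 * N.γ) * (N.γ ^ h * rew N π (dlt x) h) :=
        tsum_congr e1
    _ = ∑ x : S × A, ∑' h : ℕ,
          (N.P s a x.1 * π x.1 x.2 * N.γ) * (N.γ ^ h * rew N π (dlt x) h) :=
        Summable.tsum_finsetSum fun x _ =>
          (summable_Qf N π hP hP1 hπ0 hπ1 hr hγ0 hγ1 x.1 x.2).mul_left _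
    _ = ∑ x : S × A, (N.P s a x.1 * π x.1 x.2 * N.γ) * Qf N π x.1 x.2 := by
        refine Finset.sum_congr rfl fun x _ => ?_
        rw [tsum_mul_left, ← Qf_eq]
    _ = N.γ * ∑ s' : S, N.P s a s' * Vf N π s' := by
        rw [Fintype.sum_prod_type, Finset.mul_sum]
        refine Finset.sum_congr rfl fun s' _ => ?_
        unfold Vf
        rw [Finset.mul_sum, Finset.mul_sum]
        refine Finset.sum_congr rfl fun a' _ => ?_
        ring

lemma value_eq_rho_V : value N π = ∑ s : S, N.ρ s * Vf N π s := by
  unfold value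
  calc (∑' h : ℕ, N.γ ^ h * ∑ s : S, ∑ a : A, stateDist N π h s * π s a * N.r s a)
      = ∑' h : ℕ, ∑ x : S × A,
          (N.ρ x.1 * π x.1 x.2) * (N.γ ^ h * rew N π (dlt x) h) := by
        refine tsum_congr fun h => ?_
        rw [value_integrand_eq, Finset.mul_sum]
        refine Finset.sum_congr rfl fun x _ => ?_
        ring
    _ = ∑ x : S × A, ∑' h : ℕ,
          (N.ρ x.1 * π x.1 x.2) * (N.γ ^ h * rew N π (dlt x) h) :=
        Summable.tsum_finsetSum fun x _ =>
          (summable_Qf N π hP hP1 hπ0 hπ1 hr hγ0 hγ1 x.1 x.2).mul_left _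
    _ = ∑ x : S × A, (N.ρ x.1 * π x.1 x.2) * Qf N π x.1 x.2 := by
        refine Finset.sum_congr rfl fun x _ => ?_
        rw [tsum_mul_left, ← Qf_eq]
    _ = ∑ s : S, N.ρ s * Vf N π s := by
        rw [Fintype.sum_prod_type]
        refine Finset.sum_congr rfl fun s _ => ?_
        unfold Vf
        rw [Finset.mul_sum]
        refine Finset.sum_congr rfl fun a _ => ?_
        ring

lemma summable_value_integrand :
    Summable (fun h : ℕ =>
      N.γ ^ h * ∑ s : S, ∑ a : A, stateDist N π h s * π s a * N.r s a) := by
  have : (fun h : ℕ => N.γ ^ h * ∑ s : S, ∑ a : A, stateDist N π h s * π s a * N.r s a)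
      = fun h : ℕ => ∑ x : S × A, (N.ρ x.1 * π x.1 x.2) * (N.γ ^ h * rew N π (dlt x) h) := by
    funext h
    rw [value_integrand_eq, Finset.mul_sum]
    refine Finset.sum_congr rfl fun x _ => ?_
    ring
  rw [this]
  exact summable_sum fun x _ =>
    (summable_Qf N π hP hP1 hπ0 hπ1 hr hγ0 hγ1 x.1 x.2).mul_left _

end Helpers3

section Helpers4
variable (N : MDP S A) (π : S → A → ℝ)

lemma stateDist_nonneg_s16 (hP : ∀ s a s', 0 ≤ N.P s a s') (hπ0 : ∀ s a, 0 ≤ π s a)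
    (hρ0 : ∀ s, 0 ≤ N.ρ s) (h : ℕ) (s : S) : 0 ≤ stateDist N π h s := by
  induction h generalizing s with
  | zero => exact hρ0 s
  | succ n ih =>
      refine Finset.sum_nonneg fun q _ => Finset.sum_nonneg fun a _ => ?_
      exact mul_nonneg (mul_nonneg (ih q) (hπ0 q a)) (hP q a s)

lemma stateDist_mass (hP1 : ∀ s a, ∑ s' : S, N.P s a s' = 1)
    (hπ1 : ∀ s, ∑ a : A, π s a = 1) (hρ1 : ∑ s : S, N.ρ s = 1) (h : ℕ) :
    ∑ s : S, stateDist N π h s = 1 := by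
  induction h with
  | zero => exact hρ1
  | succ n ih =>
      show (∑ s' : S, ∑ s : S, ∑ a : A, stateDist N π n s * π s a * N.P s a s') = 1
      rw [Finset.sum_comm]
      rw [← ih]
      refine Finset.sum_congr rfl fun s _ => ?_
      rw [Finset.sum_comm]
      simp only [mul_assoc, ← Finset.mul_sum, hP1]
      simp [hπ1 s]

end Helpers4

section Absorb
variable (M : MDP S A)

lemma absorb_P_nonneg (hM : IsValidMDP M) :
    ∀ s a s', 0 ≤ (absorb M).P s a s' := by
  rintro (_|s) (_|a) (_|s') <;> first | exact hM.1 _ _ _ | norm_num [absorb]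

lemma absorb_P_rowsum (hM : IsValidMDP M) :
    ∀ s a, ∑ s' : Option S, (absorb M).P s a s' = 1 := by
  rintro (_|s) (_|a) <;>
    simp [absorb, Fintype.sum_option] <;> exact hM.2.1 _ _

lemma absorb_r_nonneg (hr : ∀ s a, 0 ≤ M.r s a) :
    ∀ s a, 0 ≤ (absorb M).r s a := by
  rintro (_|s) (_|a) <;> simp [absorb] <;> exact hr _ _

lemma absorb_rho_nonneg (hM : IsValidMDP M) : ∀ s, 0 ≤ (absorb M).ρ s := by
  rintro (_|s) <;> simp [absorb] <;> exact hM.2.2.1 _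

lemma absorb_rho_mass (hM : IsValidMDP M) : ∑ s : Option S, (absorb M).ρ s = 1 := by
  rw [Fintype.sum_option]
  simpa [absorb] using hM.2.2.2.1

lemma absorb_r_none_state (a : Option A) : (absorb M).r none a = 0 := by
  cases a <;> rfl

lemma absorb_r_none_action (s : Option S) : (absorb M).r s none = 0 := by
  cases s <;> rfl

lemma absorb_P_none_action (s : Option S) (t : S) : (absorb M).P s none (some t) = 0 := by
  cases s <;> rfl

lemma absorb_saDist_absorbed (π : Option S → Option A → ℝ)
    (init : Option S × Option A → ℝ)
    (h0 : ∀ p : Option S × Option A, p.1 ≠ none → init p = 0) :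
    ∀ (h : ℕ) (p : Option S × Option A), p.1 ≠ none →
      saDist (absorb M) π init h p = 0 := by
  intro h
  induction h with
  | zero => exact h0
  | succ n ih =>
      rintro p hp
      show (∑ q : Option S × Option A,
        saDist (absorb M) π init n q * (absorb M).P q.1 q.2 p.1 * π p.1 p.2) = 0
      refine Finset.sum_eq_zero fun q _ => ?_
      rcases hq : q.1 with _ | t
      · obtain ⟨t', ht'⟩ : ∃ t', p.1 = some t' := Option.ne_none_iff_exists'.mp hp
        have : (absorb M).P none q.2 p.1 = 0 := by
          rw [ht']
          cases q.2 <;> rfl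
        rw [this]; ring
      · have : saDist (absorb M) π init n q = 0 := ih q (by rw [hq]; simp)
        rw [this]; ring

lemma absorb_rew_absorbed (π : Option S → Option A → ℝ)
    (init : Option S × Option A → ℝ)
    (h0 : ∀ p : Option S × Option A, p.1 ≠ none → init p = 0) (h : ℕ) :
    rew (absorb M) π init h = 0 := by
  refine Finset.sum_eq_zero fun p _ => ?_
  rcases hp : p.1 with _ | t
  · rw [absorb_r_none_state]; ring
  · rw [absorb_saDist_absorbed M π init h0 h p (by rw [hp]; simp)]; ring

open Classical in
lemma Qf_absorb_none_state (π : Option S → Option A → ℝ) (a : Option A) :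
    Qf (absorb M) π none a = 0 := by
  rw [Qf_eq]
  have : ∀ h : ℕ, (absorb M).γ ^ h * rew (absorb M) π (dlt (none, a)) h = 0 := by
    intro h
    rw [absorb_rew_absorbed M π _ ?_ h, mul_zero]
    intro p hp
    unfold dlt
    rcases hp2 : p.1 with _ | t
    · exact absurd hp2 hp
    · have : p ≠ (none, a) := by
        intro hcon; rw [hcon] at hp2; simp at hp2
      simp [this]
  simp only [this, tsum_zero]

open Classical in
lemma Qf_absorb_none_action (π : Option S → Option A → ℝ) (s : Option S) :
    Qf (absorb M) π s none = 0 := by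
  rw [Qf_eq]
  have hz : ∀ h : ℕ, (absorb M).γ ^ h * rew (absorb M) π (dlt (s, none)) h = 0 := by
    rintro (_ | h)
    · rw [rew_dlt_zero, absorb_r_none_action, mul_zero]
    · have : rew (absorb M) π (dlt (s, none)) (h + 1) = 0 := by
        unfold rew
        rw [saDist_shift]
        rw [show (fun p : Option S × Option A =>
            ∑ q : Option S × Option A, dlt (s, none) q * (absorb M).P q.1 q.2 p.1 * π p.1 p.2)
          = (fun p : Option S × Option A => (absorb M).P s none p.1 * π p.1 p.2) from by
            funext p; simp [dlt, ite_mul]]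
        refine absorb_rew_absorbed M π _ ?_ h
        intro p hp
        obtain ⟨t, ht⟩ : ∃ t, p.1 = some t := Option.ne_none_iff_exists'.mp hp
        rw [ht, absorb_P_none_action]; ring
      rw [this, mul_zero]
  simp only [hz, tsum_zero]

end Absorb

lemma pointwise_bound
    (Q ζ ft : Option S → Option A → ℝ) (πt : Option S → Option A)
    (πtil : Option S → Option A → ℝ)
    (hQ0 : ∀ s a, 0 ≤ Q s a) (hQnone : ∀ s, Q s none = 0)
    (hζ01 : ∀ s a, ζ s a = 0 ∨ ζ s a = 1)
    (hgreedy : ∀ s a, ζ s a * ft s a ≤ ζ s (πt s) * ft s (πt s))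
    (hπtil : IsPolicy πtil)
    (hsupp : ∀ s a, 0 < πtil s a → ζ s a = 1 ∨ a = none)
    (s : Option S) :
    (∑ a : Option A, πtil s a * Q s a) - Q s (πt s) ≤
      (∑ a : Option A, πtil s a * |ζ s a * (Q s a - ft s a)|)
        + |ζ s (πt s) * (Q s (πt s) - ft s (πt s))| := by
  obtain ⟨hπ0, hπ1⟩ := hπtil
  have hV : (∑ a : Option A, πtil s a * Q s a)
      = ∑ a : Option A, πtil s a * (ζ s a * Q s a) := by
    refine Finset.sum_congr rfl fun a _ => ?_
    rcases (hπ0 s a).eq_or_lt with h0 | hpos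
    · rw [← h0]; ring
    · rcases hsupp s a hpos with h1 | h1
      · rw [h1]; ring
      · subst h1; rw [hQnone]; ring
  have hζQ : ζ s (πt s) * Q s (πt s) ≤ Q s (πt s) := by
    rcases hζ01 s (πt s) with h | h
    · rw [h, zero_mul]; exact hQ0 s (πt s)
    · rw [h, one_mul]
  have hsplit : (∑ a : Option A, πtil s a * (ζ s a * Q s a))
      = (∑ a : Option A, πtil s a * (ζ s a * (Q s a - ft s a)))
        + ∑ a : Option A, πtil s a * (ζ s a * ft s a) := by
    rw [← Finset.sum_add_distrib]
    exact Finset.sum_congr rfl fun a _ => by ring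
  have h1 : (∑ a : Option A, πtil s a * (ζ s a * (Q s a - ft s a)))
      ≤ ∑ a : Option A, πtil s a * |ζ s a * (Q s a - ft s a)| :=
    Finset.sum_le_sum fun a _ => mul_le_mul_of_nonneg_left (le_abs_self _) (hπ0 s a)
  have h2 : (∑ a : Option A, πtil s a * (ζ s a * ft s a))
      ≤ ζ s (πt s) * ft s (πt s) := by
    calc (∑ a : Option A, πtil s a * (ζ s a * ft s a))
        ≤ ∑ a : Option A, πtil s a * (ζ s (πt s) * ft s (πt s)) :=
          Finset.sum_le_sum fun a _ =>
            mul_le_mul_of_nonneg_left (hgreedy s a) (hπ0 s a)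
      _ = ζ s (πt s) * ft s (πt s) := by rw [← Finset.sum_mul, hπ1, one_mul]
  have h3 : ζ s (πt s) * ft s (πt s) - ζ s (πt s) * Q s (πt s)
      ≤ |ζ s (πt s) * (Q s (πt s) - ft s (πt s))| := by
    have hneg := neg_abs_le (ζ s (πt s) * (Q s (πt s) - ft s (πt s)))
    nlinarith [abs_nonneg (ζ s (πt s) * (Q s (πt s) - ft s (πt s)))]
  rw [hV]
  linarith [hsplit]

open Classical in
lemma pdl (N : MDP S A) (μ : S → A → ℝ) (πt : S → A) (πd : S → A → ℝ)
    (hcol : ∀ (s : S) (X : A → ℝ), (∑ a : A, πd s a * X a) = X (πt s))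
    (hP : ∀ s a s', 0 ≤ N.P s a s') (hP1 : ∀ s a, ∑ s' : S, N.P s a s' = 1)
    (hμ0 : ∀ s a, 0 ≤ μ s a) (hμ1 : ∀ s, ∑ a : A, μ s a = 1)
    (hr : ∀ s a, 0 ≤ N.r s a) (hγ0 : 0 ≤ N.γ) (hγ1 : N.γ < 1) (H : ℕ) :
    value N μ =
      (∑ h ∈ Finset.range H, N.γ ^ h * ∑ s : S,
        stateDist N πd h s * (Vf N μ s - Qf N μ s (πt s)))
      + (∑ h ∈ Finset.range H, N.γ ^ h * ∑ s : S,
        stateDist N πd h s * N.r s (πt s))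
      + N.γ ^ H * ∑ s : S, stateDist N πd H s * Vf N μ s := by
  induction H with
  | zero =>
      simp only [Finset.range_zero, Finset.sum_empty, zero_add, pow_zero, one_mul]
      rw [value_eq_rho_V N μ hP hP1 hμ0 hμ1 hr hγ0 hγ1]
      rfl
  | succ H ih =>
      rw [Finset.sum_range_succ, Finset.sum_range_succ, ih]
      have hstep : ∀ s' : S, stateDist N πd (H+1) s'
          = ∑ s : S, stateDist N πd H s * N.P s (πt s) s' := by
        intro s'
        show (∑ s : S, ∑ a : A, stateDist N πd H s * πd s a * N.P s a s') = _
        refine Finset.sum_congr rfl fun s _ => ?_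
        have : ∀ a : A, stateDist N πd H s * πd s a * N.P s a s'
            = πd s a * (stateDist N πd H s * N.P s a s') := by
          intro a; ring
        rw [Finset.sum_congr rfl fun a _ => this a,
          hcol s (fun a => stateDist N πd H s * N.P s a s')]
      have hQ : (∑ s : S, stateDist N πd H s * Qf N μ s (πt s))
          = (∑ s : S, stateDist N πd H s * N.r s (πt s))
            + N.γ * ∑ s' : S, stateDist N πd (H+1) s' * Vf N μ s' := by
        calc (∑ s : S, stateDist N πd H s * Qf N μ s (πt s))
            = ∑ s : S, (stateDist N πd H s * N.r s (πt s)
                + N.γ * ∑ s' : S, stateDist N πd H s * (N.P s (πt s) s' * Vf N μ s')) := by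
              refine Finset.sum_congr rfl fun s _ => ?_
              rw [bellman N μ hP hP1 hμ0 hμ1 hr hγ0 hγ1 s (πt s), mul_add,
                mul_left_comm (stateDist N πd H s) N.γ, Finset.mul_sum]
          _ = (∑ s : S, stateDist N πd H s * N.r s (πt s))
              + N.γ * ∑ s : S, ∑ s' : S, stateDist N πd H s * (N.P s (πt s) s' * Vf N μ s') := by
              rw [Finset.sum_add_distrib, ← Finset.mul_sum]
          _ = (∑ s : S, stateDist N πd H s * N.r s (πt s))
              + N.γ * ∑ s' : S, stateDist N πd (H+1) s' * Vf N μ s' := by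
              congr 1
              congr 1
              rw [Finset.sum_comm]
              refine Finset.sum_congr rfl fun s' _ => ?_
              rw [hstep s', Finset.sum_mul]
              exact Finset.sum_congr rfl fun s _ => by ring
      have expand : (∑ s : S, stateDist N πd H s * Vf N μ s)
          = (∑ s : S, stateDist N πd H s * (Vf N μ s - Qf N μ s (πt s)))
            + ∑ s : S, stateDist N πd H s * Qf N μ s (πt s) := by
        rw [← Finset.sum_add_distrib]
        exact Finset.sum_congr rfl fun s _ => by ring
      show _ = _
      rw [pow_succ]
      linear_combination (N.γ ^ H) * expand + (N.γ ^ H) * hQ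

open Classical in
/-- For a deterministic policy `π_t` that is greedy with
respect to `ζ·f_t` and any comparator policy `π̃` supported on `{ζ = 1} ∪ {a_abs}`,
the value gap is controlled by the ζ-filtered evaluation errors:
`v^{π̃} − v^{π_t} ≤ Σ_h γ^h (‖ζ(Q^{π̃} − f_t)‖_{1,η_h^{π_t}×π̃} + ‖ζ(Q^{π̃} − f_t)‖_{1,η_h^{π_t}×π_t})`. -/
theorem value_gap_decomposition (M : MDP S A) (hM : IsValidMDP M)
    (hr : ∀ s a, 0 ≤ M.r s a)
    (ζ : Option S → Option A → ℝ)
    (hζ01 : ∀ s a, ζ s a = 0 ∨ ζ s a = 1)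
    (hζa : ∀ s, ζ s none = 0) (hζs : ∀ a, ζ none a = 0)
    (ft : Option S → Option A → ℝ)
    (hftnn : ∀ s a, 0 ≤ ft s a)
    (hfta : ∀ s, ft s none = 0) (hfts : ∀ a, ft none a = 0)
    (πt : Option S → Option A)
    (hgreedy : ∀ s a, ζ s a * ft s a ≤ ζ s (πt s) * ft s (πt s))
    (πtil : Option S → Option A → ℝ) (hπtil : IsPolicy πtil)
    (hsupp : ∀ s a, 0 < πtil s a → ζ s a = 1 ∨ a = none) :
    value (absorb M) πtil -
        value (absorb M) (fun s a => if a = πt s then (1 : ℝ) else 0) ≤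
      ∑' h : ℕ, M.γ ^ h *
        ((∑ s : Option S, ∑ a : Option A,
            stateDist (absorb M) (fun s a => if a = πt s then (1 : ℝ) else 0) h s *
              πtil s a *
              |ζ s a * (Qf (absorb M) πtil s a - ft s a)|) +
          ∑ s : Option S,
            stateDist (absorb M) (fun s a => if a = πt s then (1 : ℝ) else 0) h s *
              |ζ s (πt s) * (Qf (absorb M) πtil s (πt s) - ft s (πt s))|) := by
  set N := absorb M with hNdef
  set πd : Option S → Option A → ℝ := fun s a => if a = πt s then (1:ℝ) else 0 with hπd
  have hP0 : ∀ s a s', 0 ≤ N.P s a s' := absorb_P_nonneg M hM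
  have hP1 : ∀ s a, ∑ s' : Option S, N.P s a s' = 1 := absorb_P_rowsum M hM
  have hrN : ∀ s a, 0 ≤ N.r s a := absorb_r_nonneg M hr
  have hρ0 : ∀ s, 0 ≤ N.ρ s := absorb_rho_nonneg M hM
  have hρ1 : ∑ s : Option S, N.ρ s = 1 := absorb_rho_mass M hM
  have hγ0 : 0 ≤ N.γ := hM.2.2.2.2.1
  have hγ1 : N.γ < 1 := hM.2.2.2.2.2
  have hπd0 : ∀ s a, 0 ≤ πd s a := by
    intro s a; simp only [hπd]; split <;> norm_num
  have hcol : ∀ (s : Option S) (X : Option A → ℝ),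
      (∑ a : Option A, πd s a * X a) = X (πt s) := by
    intro s X
    have : ∀ a : Option A, πd s a * X a = if a = πt s then X a else 0 := by
      intro a; simp only [hπd]; split <;> ring
    rw [Finset.sum_congr rfl fun a _ => this a,
      Finset.sum_ite_eq' Finset.univ (πt s)]
    simp
  have hπd1 : ∀ s, ∑ a : Option A, πd s a = 1 := by
    intro s
    have := hcol s (fun _ => (1:ℝ))
    simpa using this
  have hμ0 : ∀ s a, 0 ≤ πtil s a := hπtil.1
  have hμ1 : ∀ s, ∑ a : Option A, πtil s a = 1 := hπtil.2
  have hη0 : ∀ h s, 0 ≤ stateDist N πd h s :=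
    fun h s => stateDist_nonneg_s16 N πd hP0 hπd0 hρ0 h s
  have hη1 : ∀ h, ∑ s : Option S, stateDist N πd h s = 1 :=
    fun h => stateDist_mass N πd hP1 hπd1 hρ1 h
  have hQ0 : ∀ s a, 0 ≤ Qf N πtil s a :=
    fun s a => Qf_nonneg N πtil hP0 hP1 hμ0 hμ1 hrN hγ0 hγ1 s a
  have hQnone : ∀ s, Qf N πtil s none = 0 := fun s => Qf_absorb_none_action M πtil s
  set err : Option S → Option A → ℝ :=
    fun s a => |ζ s a * (Qf N πtil s a - ft s a)| with herr
  set D : ℕ → ℝ := fun h =>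
    (∑ s : Option S, ∑ a : Option A, stateDist N πd h s * πtil s a * err s a)
      + ∑ s : Option S, stateDist N πd h s * err s (πt s) with hD
  -- bound on err
  set B : ℝ := ∑ p : Option S × Option A, err p.1 p.2 with hBdef
  have herr0 : ∀ s a, 0 ≤ err s a := fun s a => abs_nonneg _
  have hBbd : ∀ s a, err s a ≤ B := fun s a =>
    Finset.single_le_sum (f := fun p : Option S × Option A => err p.1 p.2)
      (fun q _ => herr0 q.1 q.2) (Finset.mem_univ (s, a))
  have hD0 : ∀ h, 0 ≤ D h := by
    intro h
    refine add_nonneg (Finset.sum_nonneg fun s _ => Finset.sum_nonneg fun a _ => ?_)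
      (Finset.sum_nonneg fun s _ => ?_)
    · exact mul_nonneg (mul_nonneg (hη0 h s) (hμ0 s a)) (herr0 s a)
    · exact mul_nonneg (hη0 h s) (herr0 s (πt s))
  have hDle : ∀ h, D h ≤ B + B := by
    intro h
    have t1 : (∑ s : Option S, ∑ a : Option A, stateDist N πd h s * πtil s a * err s a) ≤ B := by
      calc (∑ s : Option S, ∑ a : Option A, stateDist N πd h s * πtil s a * err s a)
          ≤ ∑ s : Option S, ∑ a : Option A, stateDist N πd h s * πtil s a * B :=
            Finset.sum_le_sum fun s _ => Finset.sum_le_sum fun a _ =>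
              mul_le_mul_of_nonneg_left (hBbd s a) (mul_nonneg (hη0 h s) (hμ0 s a))
        _ = ∑ s : Option S, stateDist N πd h s * B := by
            refine Finset.sum_congr rfl fun s _ => ?_
            simp only [mul_assoc, ← Finset.mul_sum]
            rw [← Finset.sum_mul, hμ1, one_mul]
        _ = B := by rw [← Finset.sum_mul, hη1, one_mul]
    have t2 : (∑ s : Option S, stateDist N πd h s * err s (πt s)) ≤ B := by
      calc (∑ s : Option S, stateDist N πd h s * err s (πt s))
          ≤ ∑ s : Option S, stateDist N πd h s * B :=
            Finset.sum_le_sum fun s _ =>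
              mul_le_mul_of_nonneg_left (hBbd s (πt s)) (hη0 h s)
        _ = B := by rw [← Finset.sum_mul, hη1, one_mul]
    exact add_le_add t1 t2
  have hRHSsum : Summable (fun h : ℕ => N.γ ^ h * D h) := by
    refine Summable.of_nonneg_of_le
      (fun h => mul_nonneg (pow_nonneg hγ0 h) (hD0 h))
      (fun h => mul_le_mul_of_nonneg_left (hDle h) (pow_nonneg hγ0 h))
      ((summable_geometric_of_lt_one hγ0 hγ1).mul_right (B + B))
  -- pointwise bound
  have hpb : ∀ h, (∑ s : Option S,
      stateDist N πd h s * (Vf N πtil s - Qf N πtil s (πt s))) ≤ D h := by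
    intro h
    have pb : ∀ s : Option S, Vf N πtil s - Qf N πtil s (πt s)
        ≤ (∑ a : Option A, πtil s a * err s a) + err s (πt s) :=
      fun s => pointwise_bound (Qf N πtil) ζ ft πt πtil hQ0 hQnone hζ01 hgreedy
        ⟨hμ0, hμ1⟩ hsupp s
    calc (∑ s : Option S, stateDist N πd h s * (Vf N πtil s - Qf N πtil s (πt s)))
        ≤ ∑ s : Option S,
            stateDist N πd h s * ((∑ a : Option A, πtil s a * err s a) + err s (πt s)) :=
          Finset.sum_le_sum fun s _ => mul_le_mul_of_nonneg_left (pb s) (hη0 h s)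
      _ = D h := by
          simp only [hD]
          rw [← Finset.sum_add_distrib]
          refine Finset.sum_congr rfl fun s _ => ?_
          rw [mul_add, Finset.mul_sum]
          congr 1
          exact Finset.sum_congr rfl fun a _ => by ring
  have hpdl := pdl N πtil πt πd hcol hP0 hP1 hμ0 hμ1 hrN hγ0 hγ1
  -- value of πd as limit of partial sums
  have hint : ∀ h, (∑ s : Option S, ∑ a : Option A,
      stateDist N πd h s * πd s a * N.r s a)
      = ∑ s : Option S, stateDist N πd h s * N.r s (πt s) := by
    intro h
    refine Finset.sum_congr rfl fun s _ => ?_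
    have : ∀ a : Option A, stateDist N πd h s * πd s a * N.r s a
        = πd s a * (stateDist N πd h s * N.r s a) := by
      intro a; ring
    rw [Finset.sum_congr rfl fun a _ => this a,
      hcol s (fun a => stateDist N πd h s * N.r s a)]
  have hval_sum : Summable (fun h : ℕ => N.γ ^ h * ∑ s : Option S, ∑ a : Option A,
      stateDist N πd h s * πd s a * N.r s a) :=
    summable_value_integrand N πd hP0 hP1 hπd0 hπd1 hrN hγ0 hγ1
  have htend1 : Filter.Tendsto
      (fun H : ℕ => ∑ h ∈ Finset.range H,
        N.γ ^ h * ∑ s : Option S, stateDist N πd h s * N.r s (πt s))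
      Filter.atTop (nhds (value N πd)) := by
    have h0 := hval_sum.hasSum.tendsto_sum_nat
    refine h0.congr fun n => Finset.sum_congr rfl fun h _ => by rw [hint]
  -- W term
  set W : ℕ → ℝ := fun H => ∑ s : Option S, stateDist N πd H s * Vf N πtil s with hW
  have hW0 : ∀ H, 0 ≤ W H := fun H => Finset.sum_nonneg fun s _ =>
    mul_nonneg (hη0 H s) (Vf_nonneg N πtil hP0 hP1 hμ0 hμ1 hrN hγ0 hγ1 s)
  have hWle : ∀ H, W H ≤ (1 - N.γ)⁻¹ * rBound N := by
    intro H
    calc W H ≤ ∑ s : Option S, stateDist N πd H s * ((1 - N.γ)⁻¹ * rBound N) :=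
          Finset.sum_le_sum fun s _ => mul_le_mul_of_nonneg_left
            (Vf_le N πtil hP0 hP1 hμ0 hμ1 hrN hγ0 hγ1 s) (hη0 H s)
      _ = (1 - N.γ)⁻¹ * rBound N := by rw [← Finset.sum_mul, hη1, one_mul]
  have hWtend : Filter.Tendsto (fun H : ℕ => N.γ ^ H * W H) Filter.atTop (nhds 0) := by
    refine squeeze_zero (fun H => mul_nonneg (pow_nonneg hγ0 H) (hW0 H))
      (fun H => mul_le_mul_of_nonneg_left (hWle H) (pow_nonneg hγ0 H)) ?_
    simpa using
      (tendsto_pow_atTop_nhds_zero_of_lt_one hγ0 hγ1).mul_const ((1 - N.γ)⁻¹ * rBound N)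
  have key : ∀ H : ℕ, value N πtil
      - (∑ h ∈ Finset.range H, N.γ ^ h * ∑ s : Option S, stateDist N πd h s * N.r s (πt s))
      ≤ (∑' h : ℕ, N.γ ^ h * D h) + N.γ ^ H * W H := by
    intro H
    have hp := hpdl H
    have h1 : (∑ h ∈ Finset.range H, N.γ ^ h * ∑ s : Option S,
        stateDist N πd h s * (Vf N πtil s - Qf N πtil s (πt s)))
        ≤ ∑ h ∈ Finset.range H, N.γ ^ h * D h :=
      Finset.sum_le_sum fun h _ => mul_le_mul_of_nonneg_left (hpb h) (pow_nonneg hγ0 h)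
    have h2 : (∑ h ∈ Finset.range H, N.γ ^ h * D h) ≤ ∑' h : ℕ, N.γ ^ h * D h :=
      Summable.sum_le_tsum _ (fun h _ => mul_nonneg (pow_nonneg hγ0 h) (hD0 h)) hRHSsum
    linarith
  have hlim1 : Filter.Tendsto
      (fun H : ℕ => value N πtil - ∑ h ∈ Finset.range H,
        N.γ ^ h * ∑ s : Option S, stateDist N πd h s * N.r s (πt s))
      Filter.atTop (nhds (value N πtil - value N πd)) :=
    tendsto_const_nhds.sub htend1
  have hlim2 : Filter.Tendsto
      (fun H : ℕ => (∑' h : ℕ, N.γ ^ h * D h) + N.γ ^ H * W H)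
      Filter.atTop (nhds ((∑' h : ℕ, N.γ ^ h * D h) + 0)) :=
    tendsto_const_nhds.add hWtend
  have final := le_of_tendsto_of_tendsto' hlim1 hlim2 key
  rw [add_zero] at final
  exact final
end Helpers
end
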